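/- Let E be a real Banach space and let K be a convex weak* compact subset of E* whose interior with respect to the norm topology of E* is nonempty. Then the weak* exposed points of K coincide with the affine exposed points of K: w*Exp(K) = AExp(K). -/

import Mathlib

open NormedSpace


open NormedSpace

/-- A functional on `E*` that is "weak*-continuous at 0 on the unit ball" is evaluation at
some point of `E` (an approximation form of the Krein–Smulian / Banach–Dieudonné theorem). -/
theorem aux_norm_smul_18 {E : Type*} [NormedAddCommGroup E] [NormedSpace ℝ E]
    (c : ℝ) (y : E →L[ℝ] ℝ) : ‖c • y‖ = |c| * ‖y‖ := by
  have := norm_smul (α := ℝ) (β := E →L[ℝ] ℝ) c y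
  rwa [Real.norm_eq_abs] at this

set_option maxHeartbeats 1000000 in
theorem aux_ks_18 {E : Type*} [NormedAddCommGroup E] [NormedSpace ℝ E] [CompleteSpace E]
    (f : (E →L[ℝ] ℝ) →L[ℝ] ℝ)
    (hf : ∀ ε > 0, ∃ s : Finset E, ∃ δ > 0, ∀ y : E →L[ℝ] ℝ,
      ‖y‖ ≤ 1 → (∀ x ∈ s, |y x| < δ) → |f y| ≤ ε) :
    ∃ x : E, ∀ y : E →L[ℝ] ℝ, f y = y x := by
  -- the linear version of inclusion in double dual
  set J : E →ₗ[ℝ] ((E →L[ℝ] ℝ) →ₗ[ℝ] ℝ) :=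
    { toFun := fun x => (inclusionInDoubleDual ℝ E x).toLinearMap
      map_add' := by intro a b; ext y; simp
      map_smul' := by intro c a; ext y; simp } with hJ
  have hJapp : ∀ (x : E) (y : E →L[ℝ] ℝ), J x y = y x := fun x y => dual_def ℝ E x y
  have key : ∀ ε > 0, ∃ x : E, ‖f - inclusionInDoubleDual ℝ E x‖ ≤ ε := by
    intro ε hε
    obtain ⟨s, δ, hδ, hb⟩ := hf ε hε
    set L : s → ((E →L[ℝ] ℝ) →ₗ[ℝ] ℝ) := fun i => J i.1 with hL
    set N : Submodule ℝ (E →L[ℝ] ℝ) := ⨅ i : s, LinearMap.ker (L i) with hN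
    letI : NormedAddCommGroup N := inferInstance
    letI : NormedSpace ℝ N := inferInstance
    have hNf : ∀ y ∈ N, |f y| ≤ ε * ‖y‖ := by
      intro y hy
      have hy0 : ∀ x ∈ s, y x = 0 := by
        intro x hx
        have := (Submodule.mem_iInf _).mp hy ⟨x, hx⟩
        simpa [hL, hJapp] using this
      rcases eq_or_ne y 0 with rfl | hne
      · simp
      · have hny : 0 < ‖y‖ := norm_pos_iff.mpr hne
        have hn1 : ‖‖y‖⁻¹ • y‖ ≤ 1 := by
          rw [aux_norm_smul_18, abs_inv, abs_norm, inv_mul_cancel₀ hny.ne']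
        have h1 : |f (‖y‖⁻¹ • y)| ≤ ε := by
          refine hb _ hn1 ?_
          intro x hx
          simp [ContinuousLinearMap.smul_apply, hy0 x hx, hδ]
        rw [map_smul, smul_eq_mul, abs_mul, abs_inv, abs_norm] at h1
        have h2 := mul_le_mul_of_nonneg_left h1 hny.le
        rw [← mul_assoc, mul_inv_cancel₀ hny.ne', one_mul] at h2
        linarith
    set g0 : N →L[ℝ] ℝ := f.comp (Submodule.subtypeL N) with hg0
    have hg0n : ‖g0‖ ≤ ε := by
      apply ContinuousLinearMap.opNorm_le_bound _ hε.le
      intro y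
      simpa [hg0, Real.norm_eq_abs] using hNf y.1 y.2
    obtain ⟨g, hg_ext, hg_norm⟩ := exists_extension_norm_eq N g0
    set h : (E →L[ℝ] ℝ) →L[ℝ] ℝ := f - g with hh
    have hker : N ≤ LinearMap.ker h.toLinearMap := by
      intro y hy
      have : g y = f y := by
        have := hg_ext ⟨y, hy⟩
        simpa [hg0] using this
      simp [hh, LinearMap.mem_ker, this]
    have hspan : h.toLinearMap ∈ Submodule.span ℝ (Set.range L) :=
      mem_span_of_iInf_ker_le_ker (by rw [← hN]; exact hker)
    have hrange : Submodule.span ℝ (Set.range L) ≤ LinearMap.range J := by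
      rw [Submodule.span_le]
      rintro _ ⟨i, rfl⟩
      exact ⟨i.1, rfl⟩
    obtain ⟨x, hx⟩ := hrange hspan
    refine ⟨x, ?_⟩
    have hfg : f - inclusionInDoubleDual ℝ E x = g := by
      ext y
      have h1 : h y = y x := by rw [← hJapp x y, hx]; rfl
      have : f y - g y = y x := by simpa [hh] using h1
      simp only [ContinuousLinearMap.sub_apply]
      rw [dual_def]; linarith
    rw [hfg, hg_norm]; exact hg0n
  have hcl : f ∈ closure (Set.range (inclusionInDoubleDual ℝ E)) := by
    refine (Metric.mem_closure_iff (α := (E →L[ℝ] ℝ) →L[ℝ] ℝ)).2 fun ε hε => ?_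
    obtain ⟨x, hx⟩ := key (ε / 2) (by linarith)
    exact ⟨inclusionInDoubleDual ℝ E x, ⟨x, rfl⟩, by
      exact (dist_eq_norm_sub f (inclusionInDoubleDual ℝ E x)).trans_lt (by linarith : ‖f - inclusionInDoubleDual ℝ E x‖ < ε)⟩
  have hclosed : IsClosed (Set.range (inclusionInDoubleDual ℝ E)) := by
    have hiso : Isometry (fun x : E => inclusionInDoubleDualLi ℝ (E := E) x) :=
      (inclusionInDoubleDualLi ℝ (E := E)).isometry
    have h2 : IsClosed (Set.range fun x : E => inclusionInDoubleDualLi ℝ (E := E) x) :=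
      hiso.isClosedEmbedding.isClosed_range
    exact h2
  obtain ⟨x, hx⟩ := hclosed.closure_subset hcl
  exact ⟨x, fun y => by rw [← hx, dual_def]⟩

theorem aux_nhds_18 {E : Type*} [NormedAddCommGroup E] [NormedSpace ℝ E]
    (U : Set (WeakDual ℝ E)) (hU : U ∈ nhds (0 : WeakDual ℝ E)) :
    ∃ s : Finset E, ∃ δ > 0, ∀ y : WeakDual ℝ E, (∀ x ∈ s, |y x| < δ) → y ∈ U := by
  have hb := LinearMap.hasBasis_weakBilin (topDualPairing ℝ E)
  replace hU := hb.mem_iff.mp hU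
  obtain ⟨V, hV, hVU⟩ := hU
  obtain ⟨s, δ, hδ, rfl⟩ := (SeminormFamily.basisSets_iff _).mp hV
  refine ⟨s, δ, hδ, fun y hy => ?_⟩
  apply hVU
  show y ∈ Seminorm.ball _ 0 δ
  refine (Seminorm.mem_ball_zero _).2 ?_
  refine Seminorm.finset_sup_apply_lt hδ fun x hx => ?_
  have h1 : (topDualPairing ℝ E).toSeminormFamily x y = |y x| := by
    show ‖(topDualPairing ℝ E) y x‖ = |y x|
    rfl
  exact h1.trans_lt (hy x hx)

set_option maxHeartbeats 4000000

/-- Let `E` be a real Banach space and `K` a convex weak* compact subset of `E*` with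
nonempty interior for the norm topology of `E*`. Then the weak* exposed points of `K`
coincide with its affine exposed points (for weak*-continuous affine maps `τ : K → ℝ`). -/
theorem stmt_18 {E : Type*} [NormedAddCommGroup E] [NormedSpace ℝ E] [CompleteSpace E]
    (K : Set (WeakDual ℝ E)) (hconv : Convex ℝ K) (hcomp : IsCompact K)
    (hint : (interior (show Set (E →L[ℝ] ℝ) from K)).Nonempty) :
    {p ∈ K | ∃ x : E, ∀ q ∈ K, q ≠ p → q x < p x} =
      {p : WeakDual ℝ E | ∃ hp : p ∈ K, ∃ τ : K → ℝ, Continuous τ ∧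
        (∀ (a b : WeakDual ℝ E) (ha : a ∈ K) (hb : b ∈ K) (l : ℝ), 0 ≤ l → l ≤ 1 →
          ∀ hm : l • a + (1 - l) • b ∈ K,
            τ ⟨l • a + (1 - l) • b, hm⟩ = l * τ ⟨a, ha⟩ + (1 - l) * τ ⟨b, hb⟩) ∧
        (∀ q : WeakDual ℝ E, ∀ hq : q ∈ K, q ≠ p → τ ⟨q, hq⟩ < τ ⟨p, hp⟩)} := by
  ext p
  simp only [Set.mem_sep_iff, Set.mem_setOf_eq]
  constructor
  · rintro ⟨hpK, x, hx⟩
    refine ⟨hpK, fun q => q.1 x,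
      (WeakDual.eval_continuous x).comp continuous_subtype_val, ?_, ?_⟩
    · intro a b ha hb l h0 h1 hm
      rfl
    · exact fun q hq hne => hx q hq hne
  · rintro ⟨hp, τ, hτc, hτaff, hτexp⟩
    classical
    refine ⟨hp, ?_⟩
    -- a norm-ball inside K
    obtain ⟨p0', hp0'⟩ := hint
    obtain ⟨ρ, hρ, hball⟩ := Metric.mem_nhds_iff.mp (mem_interior_iff_mem_nhds.mp hp0')
    set r : ℝ := ρ / 2 with hrdef
    have hr : 0 < r := by positivity
    set p0 : WeakDual ℝ E := p0' with hp0def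
    set no : WeakDual ℝ E → ℝ := fun y => ‖WeakDual.toStrongDual y‖ with hno
    have no_nonneg : ∀ y, 0 ≤ no y := fun y => norm_nonneg _
    have no_smul : ∀ (c : ℝ) (y : WeakDual ℝ E), no (c • y) = |c| * no y := by
      intro c y
      have h1 : WeakDual.toStrongDual (c • y) = c • WeakDual.toStrongDual y :=
        map_smul WeakDual.toStrongDual c y
      calc no (c • y) = ‖c • WeakDual.toStrongDual y‖ := congrArg norm h1
      _ = |c| * no y := aux_norm_smul_18 c _
    have no_add : ∀ y z : WeakDual ℝ E, no (y + z) ≤ no y + no z := by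
      intro y z
      have h1 : WeakDual.toStrongDual (y + z)
          = WeakDual.toStrongDual y + WeakDual.toStrongDual z := map_add _ y z
      calc no (y + z) = ‖WeakDual.toStrongDual y + WeakDual.toStrongDual z‖ := congrArg norm h1
      _ ≤ no y + no z := norm_add_le _ _
    have hmem : ∀ y : WeakDual ℝ E, no y ≤ r → p0 + y ∈ K := by
      intro y hy
      have hd : (p0' + WeakDual.toStrongDual y : E →L[ℝ] ℝ) ∈ Metric.ball p0' ρ := by
        rw [Metric.mem_ball, dist_eq_norm, add_sub_cancel_left]
        calc ‖WeakDual.toStrongDual y‖ ≤ r := hy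
        _ < ρ := by rw [hrdef]; linarith
      exact hball hd
    have hp0K : p0 ∈ K := by
      have := hmem 0 (by simp [hno, hr.le])
      rwa [add_zero] at this
    -- the local affine function
    set Fq : WeakDual ℝ E → ℝ :=
      fun y => if h : p0 + y ∈ K then τ ⟨p0 + y, h⟩ - τ ⟨p0, hp0K⟩ else 0 with hFqdef
    have hFq : ∀ (y) (h : p0 + y ∈ K), Fq y = τ ⟨p0 + y, h⟩ - τ ⟨p0, hp0K⟩ := by
      intro y h
      simp only [hFqdef]
      exact dif_pos h
    have hF0 : Fq 0 = 0 := by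
      rw [hFq 0 (by rwa [add_zero])]
      rw [show τ ⟨p0 + 0, by rwa [add_zero]⟩ = τ ⟨p0, hp0K⟩ from
        congrArg τ (Subtype.ext (add_zero p0))]
      ring
    have hFs : ∀ (t : ℝ), 0 ≤ t → t ≤ 1 → ∀ (y) (_ : p0 + y ∈ K),
        Fq (t • y) = t * Fq y := by
      intro t ht0 ht1 y h1
      have hcomb : t • (p0 + y) + (1 - t) • p0 ∈ K := hconv h1 hp0K ht0 (by linarith) (by ring)
      have harg : t • (p0 + y) + (1 - t) • p0 = p0 + t • y := by module
      have h2 : p0 + t • y ∈ K := harg ▸ hcomb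
      have h3 := hτaff (p0 + y) p0 h1 hp0K t ht0 ht1 hcomb
      have h4 : τ ⟨t • (p0 + y) + (1 - t) • p0, hcomb⟩ = τ ⟨p0 + t • y, h2⟩ :=
        congrArg τ (Subtype.ext harg)
      rw [hFq _ h2, hFq _ h1, ← h4, h3]
      ring
    have hFm : ∀ (y z) (_ : p0 + y ∈ K) (_ : p0 + z ∈ K),
        Fq ((1/2 : ℝ) • (y + z)) = (Fq y + Fq z) / 2 := by
      intro y z hy hz
      have hcomb : (1/2 : ℝ) • (p0 + y) + (1 - (1/2 : ℝ)) • (p0 + z) ∈ K :=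
        hconv hy hz (by norm_num) (by norm_num) (by ring)
      have harg : (1/2 : ℝ) • (p0 + y) + (1 - (1/2 : ℝ)) • (p0 + z)
          = p0 + (1/2 : ℝ) • (y + z) := by module
      have h2 : p0 + (1/2 : ℝ) • (y + z) ∈ K := harg ▸ hcomb
      have h3 := hτaff (p0 + y) (p0 + z) hy hz (1/2) (by norm_num) (by norm_num) hcomb
      have h4 : τ ⟨(1/2 : ℝ) • (p0 + y) + (1 - (1/2 : ℝ)) • (p0 + z), hcomb⟩
          = τ ⟨p0 + (1/2 : ℝ) • (y + z), h2⟩ := congrArg τ (Subtype.ext harg)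
      rw [hFq _ h2, hFq _ hy, hFq _ hz, ← h4, h3]
      ring
    -- well-definedness of the global extension
    have hWD : ∀ (y : WeakDual ℝ E) (c d : ℝ), 0 < c → 0 < d → c ≤ d → no (d • y) ≤ r →
        Fq (c • y) * d = Fq (d • y) * c := by
      intro y c d hc hd hcd hdr
      have hmem' : p0 + d • y ∈ K := hmem _ hdr
      have ht : c / d ≤ 1 := by rw [div_le_one hd]; exact hcd
      have ht0 : 0 ≤ c / d := (div_pos hc hd).le
      have heq : c • y = (c / d) • (d • y) := by
        rw [smul_smul]
        congr 1
        field_simp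
      rw [heq, hFs (c / d) ht0 ht _ hmem']
      field_simp
    have hWD' : ∀ (y : WeakDual ℝ E) (c d : ℝ), 0 < c → 0 < d → no (c • y) ≤ r →
        no (d • y) ≤ r → Fq (c • y) / c = Fq (d • y) / d := by
      intro y c d hc hd hcr hdr
      rcases le_total c d with h | h
      · rw [div_eq_div_iff hc.ne' hd.ne']
        exact hWD y c d hc hd h hdr
      · rw [div_eq_div_iff hc.ne' hd.ne']
        have := hWD y d c hd hc h hcr
        linarith
    set cf : WeakDual ℝ E → ℝ := fun y => r / (2 * (no y + 1)) with hcf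
    have hcpos : ∀ y, 0 < cf y := by
      intro y
      have := no_nonneg y
      apply div_pos hr
      nlinarith
    have hcr : ∀ y, no (cf y • y) ≤ r := by
      intro y
      have h0 := no_nonneg y
      have hD : (0:ℝ) < 2 * (no y + 1) := by nlinarith
      rw [no_smul, abs_of_pos (hcpos y), hcf]
      rw [div_mul_eq_mul_div, div_le_iff₀ hD]
      nlinarith
    set f : WeakDual ℝ E → ℝ := fun y => Fq (cf y • y) / cf y with hfdef
    have hmaster : ∀ (y : WeakDual ℝ E) (c : ℝ), 0 < c → no (c • y) ≤ r →
        f y = Fq (c • y) / c := by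
      intro y c hc h
      exact hWD' y (cf y) c (hcpos y) hc (hcr y) h
    have hf0 : f 0 = 0 := by
      show Fq (cf 0 • 0) / cf 0 = 0
      rw [smul_zero, hF0, zero_div]
    have hadd : ∀ y z : WeakDual ℝ E, f (y + z) = f y + f z := by
      intro y z
      have h0y := no_nonneg y
      have h0z := no_nonneg z
      set c : ℝ := r / (2 * (no y + no z + 1)) with hc
      have hD : (0:ℝ) < 2 * (no y + no z + 1) := by nlinarith
      have hcpos' : 0 < c := div_pos hr hD
      have hby : no ((2 * c) • y) ≤ r := by
        rw [no_smul, abs_of_pos (by linarith), hc]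
        rw [mul_comm (2 : ℝ) _, mul_assoc, div_mul_eq_mul_div, div_le_iff₀ hD]
        nlinarith
      have hbz : no ((2 * c) • z) ≤ r := by
        rw [no_smul, abs_of_pos (by linarith), hc]
        rw [mul_comm (2 : ℝ) _, mul_assoc, div_mul_eq_mul_div, div_le_iff₀ hD]
        nlinarith
      have hbyz : no (c • (y + z)) ≤ r := by
        rw [no_smul, abs_of_pos hcpos']
        have h1 := no_add y z
        have h2 : c * no (y + z) ≤ c * (no y + no z) := by nlinarith
        refine h2.trans ?_
        rw [hc, div_mul_eq_mul_div, div_le_iff₀ hD]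
        nlinarith
      have hmy : p0 + (2 * c) • y ∈ K := hmem _ hby
      have hmz : p0 + (2 * c) • z ∈ K := hmem _ hbz
      have harg : c • (y + z) = (1/2 : ℝ) • ((2 * c) • y + (2 * c) • z) := by module
      have h5 := hFm ((2 * c) • y) ((2 * c) • z) hmy hmz
      have e0 : f (y + z) = Fq (c • (y + z)) / c := hmaster _ c hcpos' hbyz
      have e1 : f y = Fq ((2 * c) • y) / (2 * c) := hmaster y (2 * c) (by linarith) hby
      have e2 : f z = Fq ((2 * c) • z) / (2 * c) := hmaster z (2 * c) (by linarith) hbz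
      rw [e0, e1, e2, harg, h5]
      field_simp
    have hneg : ∀ y : WeakDual ℝ E, f (-y) = -f y := by
      intro y
      have h1 := hadd y (-y)
      rw [add_neg_cancel, hf0] at h1
      linarith
    have hsmulpos : ∀ (t : ℝ), 0 < t → ∀ y : WeakDual ℝ E, f (t • y) = t * f y := by
      intro t ht y
      have h0y := no_nonneg y
      set c : ℝ := r / (2 * ((t + 1) * (no y + 1))) with hc
      have hD : (0:ℝ) < 2 * ((t + 1) * (no y + 1)) := by nlinarith
      have hcpos' : 0 < c := div_pos hr hD
      have hct : 0 < c * t := mul_pos hcpos' ht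
      have hb1 : no ((c * t) • y) ≤ r := by
        rw [no_smul, abs_of_pos hct, hc]
        rw [div_mul_eq_mul_div, div_mul_eq_mul_div, div_le_iff₀ hD]
        nlinarith
      have hb2 : no (c • (t • y)) ≤ r := by
        rw [smul_smul]
        exact hb1
      have e1 : f (t • y) = Fq (c • (t • y)) / c := hmaster _ c hcpos' hb2
      have e2 : f y = Fq ((c * t) • y) / (c * t) := hmaster y (c * t) hct hb1
      rw [e1, e2, smul_smul]
      field_simp
    have hsmul : ∀ (t : ℝ) (y : WeakDual ℝ E), f (t • y) = t * f y := by
      intro t y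
      rcases lt_trichotomy t 0 with h | h | h
      · have ht' : 0 < -t := by linarith
        have heq : t • y = (-t) • (-y) := by module
        rw [heq, hsmulpos _ ht' (-y), hneg y]
        ring
      · rw [h, zero_smul, hf0]
        ring
      · exact hsmulpos t h y
    -- boundedness
    haveI : CompactSpace ↥K := isCompact_iff_compactSpace.mp hcomp
    obtain ⟨M, hM⟩ := (isCompact_range hτc).isBounded.exists_norm_le
    have hMb : ∀ a : ↥K, |τ a| ≤ M := by
      intro a
      have := hM (τ a) ⟨a, rfl⟩
      rwa [Real.norm_eq_abs] at this
    have hM0 : 0 ≤ M := (abs_nonneg _).trans (hMb ⟨p0, hp0K⟩)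
    have hFbd : ∀ a, |Fq a| ≤ 2 * M := by
      intro a
      by_cases h : p0 + a ∈ K
      · rw [hFq _ h]
        have h1 := hMb ⟨p0 + a, h⟩
        have h2 := hMb ⟨p0, hp0K⟩
        have := abs_sub (τ ⟨p0 + a, h⟩) (τ ⟨p0, hp0K⟩)
        linarith
      · simp only [hFqdef]
        rw [dif_neg h]
        simp [hM0]
    have hnoy' : ∀ y : E →L[ℝ] ℝ, no y = ‖y‖ := fun y => rfl
    have hbd : ∀ y : E →L[ℝ] ℝ, ‖f y‖ ≤ (4 * M / r) * ‖y‖ := by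
      intro y
      have hnoy : no y = ‖y‖ := rfl
      rcases eq_or_ne (no y) 0 with h | h
      · have hy0 : y = (0 : WeakDual ℝ E) := by
          have : WeakDual.toStrongDual y = 0 := by
            rw [← norm_eq_zero]; exact h
          exact WeakDual.toStrongDual.injective (by simpa using this)
        rw [hy0, hf0]
        simp
        exact mul_nonneg (div_nonneg (by linarith) hr.le) (norm_nonneg _)
      · have hny : 0 < no y := lt_of_le_of_ne (no_nonneg y) (Ne.symm h)
        set c : ℝ := r / (2 * no y) with hc
        have hcpos' : 0 < c := div_pos hr (by linarith)
        have hcb : no (c • y) ≤ r := by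
          refine (no_smul c y).trans_le ?_
          rw [abs_of_pos hcpos', hc, div_mul_eq_mul_div, div_le_iff₀ (by linarith : (0:ℝ) < 2 * no y)]
          nlinarith
        have e1 : f y = Fq (c • y) / c := hmaster y c hcpos' hcb
        rw [Real.norm_eq_abs, e1, abs_div, abs_of_pos hcpos']
        rw [div_le_iff₀ hcpos']
        have heq : (4 * M / r) * ‖y‖ * c = 2 * M := by
          rw [← hnoy, hc]
          field_simp
          ring
        rw [heq]
        exact hFbd _
    -- the bounded linear functional
    set flin : (E →L[ℝ] ℝ) →ₗ[ℝ] ℝ :=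
      { toFun := f, map_add' := hadd, map_smul' := fun t y => hsmul t y } with hflin
    set fL : (E →L[ℝ] ℝ) →L[ℝ] ℝ := flin.mkContinuous (4 * M / r) hbd with hfL
    have hfLapp : ∀ y : WeakDual ℝ E, fL y = f y := by
      intro y
      rfl
    -- the hypothesis of the Krein-Smulian lemma
    have hKS : ∀ ε > 0, ∃ s : Finset E, ∃ δ > 0, ∀ y : E →L[ℝ] ℝ,
        ‖y‖ ≤ 1 → (∀ x ∈ s, |y x| < δ) → |fL y| ≤ ε := by
      intro ε hε
      set ε₀ : ℝ := ε * (r / 2) with hε₀def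
      have hε₀ : 0 < ε₀ := by positivity
      have hca : ContinuousAt τ ⟨p0, hp0K⟩ := hτc.continuousAt
      have hev : ∀ᶠ z : ↥K in nhds ⟨p0, hp0K⟩, |τ z - τ ⟨p0, hp0K⟩| < ε₀ := by
        have := Metric.tendsto_nhds.mp hca ε₀ hε₀
        simpa [Real.dist_eq] using this
      rw [nhds_subtype_eq_comap, Filter.eventually_comap] at hev
      have h2 : Filter.Tendsto (fun y : WeakDual ℝ E => p0 + y) (nhds 0) (nhds p0) := by
        have hcont : Continuous (fun y : WeakDual ℝ E => p0 + y) :=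
          continuous_const.add continuous_id
        have h3 : Filter.Tendsto (fun y : WeakDual ℝ E => p0 + y) (nhds 0)
            (nhds (p0 + 0)) := hcont.continuousAt
        rwa [add_zero] at h3
      have hU0 := h2.eventually hev
      obtain ⟨s, δ, hδ, hs⟩ := aux_nhds_18 _ hU0
      refine ⟨s, 2 * δ / r, by positivity, ?_⟩
      intro y hy1 hyx
      set w : WeakDual ℝ E := (r / 2 : ℝ) • y with hw
      have hnw : no w ≤ r := by
        rw [hw]; refine (no_smul _ y).trans_le ?_; rw [abs_of_pos (by linarith : (0:ℝ) < r / 2)]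
        have h4 : no y ≤ 1 := by rw [hnoy']; exact hy1
        have h5 := no_nonneg y
        calc r / 2 * no y ≤ r / 2 * 1 :=
          mul_le_mul_of_nonneg_left h4 (by linarith)
        _ ≤ r := by linarith
      have hmw : p0 + w ∈ K := hmem w hnw
      have hwx : ∀ x ∈ s, |w x| < δ := by
        intro x hx
        have h6 : w x = (r / 2) * y x := rfl
        rw [h6, abs_mul, abs_of_pos (by linarith : (0:ℝ) < r / 2)]
        have h7 := hyx x hx
        calc r / 2 * |y x| < r / 2 * (2 * δ / r) :=
          mul_lt_mul_of_pos_left h7 (by linarith)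
        _ = δ := by field_simp
      have h7' := hs w hwx
      simp only [Set.mem_setOf_eq] at h7'
      have h7 := h7' ⟨p0 + w, hmw⟩ rfl
      have h8 : |Fq w| ≤ ε₀ := by
        rw [hFq w hmw]
        exact h7.le
      have h9 : f y = Fq w / (r / 2) := hmaster y (r / 2) (by linarith) hnw
      rw [hfLapp y, h9, abs_div, abs_of_pos (by linarith : (0:ℝ) < r / 2)]
      rw [div_le_iff₀ (by linarith : (0:ℝ) < r / 2)]
      rw [← hε₀def]
      exact h8
    obtain ⟨x, hx⟩ := aux_ks_18 fL hKS
    refine ⟨x, ?_⟩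
    have hTau : ∀ (q) (hq : q ∈ K), τ ⟨q, hq⟩ - τ ⟨p0, hp0K⟩ = q x - p0 x := by
      intro q hq
      set w : WeakDual ℝ E := q - p0 with hw
      have h0w := no_nonneg w
      set t : ℝ := min (1/2 : ℝ) (r / (2 * (no w + 1))) with ht
      have hD : (0:ℝ) < 2 * (no w + 1) := by nlinarith
      have htpos : 0 < t := lt_min (by norm_num) (div_pos hr hD)
      have ht1 : t ≤ 1 := (min_le_left _ _).trans (by norm_num)
      have htr : no (t • w) ≤ r := by
        rw [no_smul, abs_of_pos htpos]
        have h5 : t ≤ r / (2 * (no w + 1)) := min_le_right _ _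
        calc t * no w ≤ (r / (2 * (no w + 1))) * no w :=
          mul_le_mul_of_nonneg_right h5 h0w
        _ ≤ r := by rw [div_mul_eq_mul_div, div_le_iff₀ hD]; nlinarith
      have hcomb : t • q + (1 - t) • p0 ∈ K := hconv hq hp0K htpos.le (by linarith) (by ring)
      have harg : p0 + t • w = t • q + (1 - t) • p0 := by rw [hw]; module
      have hmem2 : p0 + t • w ∈ K := by rw [harg]; exact hcomb
      have h3 := hτaff q p0 hq hp0K t htpos.le ht1 hcomb
      have h4 : τ ⟨p0 + t • w, hmem2⟩ = τ ⟨t • q + (1 - t) • p0, hcomb⟩ :=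
        congrArg τ (Subtype.ext harg)
      have h5 : Fq (t • w) = t * (τ ⟨q, hq⟩ - τ ⟨p0, hp0K⟩) := by
        rw [hFq _ hmem2, h4, h3]; ring
      have h6 : f w = Fq (t • w) / t := hmaster w t htpos htr
      have h7 : fL w = w x := hx w
      have h8 : fL w = f w := hfLapp w
      have h9 : w x = q x - p0 x := rfl
      have h10 : f w = τ ⟨q, hq⟩ - τ ⟨p0, hp0K⟩ := by
        rw [h6, h5]
        field_simp
      rw [← h10, ← h8, h7, h9]
    intro q hq hne
    have hlt := hτexp q hq hne
    have e1 := hTau q hq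
    have e2 := hTau p hp
    have h11 : q x - p0 x < p x - p0 x := by rw [← e1, ← e2]; linarith
    linarith
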